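/- Let Ω be a measurable space and X a Polish space. If F : Ω → X is a multifunction whose graph Gr F := {(ω, x) | x ∈ F(ω)} is measurable with respect to the product σ-algebra of the σ-algebra of Ω and the Borel σ-algebra of X, then F is universally Borel-measurable: for every Borel set A ⊆ X and every finite measure μ on Ω, the set F⁻¹(A) := {ω | F(ω) ∩ A ≠ ∅} lies in the μ-completion of the σ-algebra of Ω. -/

import Mathlib

open MeasureTheory Set Filter Topology ENNReal

/-- If a set can be approximated from inside by measurable sets, it is null measurable. -/
lemma nullMeasurableSet_of_inner {α : Type*} [MeasurableSpace α] (ν : Measure α)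
    [IsFiniteMeasure ν] {S : Set α}
    (h : ∀ ε : ℝ≥0∞, ε ≠ 0 → ∃ C, MeasurableSet C ∧ C ⊆ S ∧ ν S ≤ ν C + ε) :
    NullMeasurableSet S ν := by
  choose C hCm hCsub hCle using fun n : ℕ => h ((n + 1 : ℕ) : ℝ≥0∞)⁻¹ (by simp)
  set D : Set α := ⋃ n, C n with hD
  have hDm : MeasurableSet D := MeasurableSet.iUnion hCm
  have hDsub : D ⊆ S := iUnion_subset hCsub
  have hle : ν S ≤ ν D := by
    refine ENNReal.le_of_forall_pos_le_add fun ε hε hfin => ?_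
    obtain ⟨n, hn⟩ := ENNReal.exists_inv_nat_lt (a := (ε : ℝ≥0∞)) (by exact_mod_cast hε.ne')
    calc ν S ≤ ν (C n) + ((n + 1 : ℕ) : ℝ≥0∞)⁻¹ := hCle n
    _ ≤ ν D + ε :=
        add_le_add (measure_mono (subset_iUnion _ n))
          (le_of_lt (lt_of_le_of_lt
            (by gcongr; exact_mod_cast Nat.le_succ n) hn))
  have hnull : ν (S \ D) = 0 := by
    have h1 : S \ D ⊆ toMeasurable ν S \ D := diff_subset_diff_left (subset_toMeasurable ν S)
    have h2 : ν (toMeasurable ν S \ D) = ν (toMeasurable ν S) - ν D :=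
      measure_diff (hDsub.trans (subset_toMeasurable ν S)) hDm.nullMeasurableSet
        (measure_ne_top ν D)
    have h3 : ν (toMeasurable ν S) = ν S := measure_toMeasurable S
    have : ν (toMeasurable ν S \ D) = 0 := by
      rw [h2, h3, tsub_eq_zero_iff_le]; exact hle
    exact measure_mono_null h1 this
  refine hDm.nullMeasurableSet.congr ?_
  rw [Filter.eventuallyEq_set]
  refine MeasureTheory.ae_iff.2 ?_
  refine measure_mono_null ?_ hnull
  intro x hx
  simp only [mem_setOf_eq, not_iff, mem_diff] at hx ⊢
  by_cases hxD : x ∈ D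
  · exact absurd (hx.2 (hDsub hxD)).elim (by tauto)
  · constructor
    · tauto
    · exact hxD

/-- Analytic sets in a Polish space are universally measurable. -/
lemma AnalyticSet.nullMeasurableSet' {α : Type*} [TopologicalSpace α] [PolishSpace α]
    [MeasurableSpace α] [BorelSpace α] {s : Set α} (hs : AnalyticSet s)
    (ν : Measure α) [IsFiniteMeasure ν] : NullMeasurableSet s ν := by
  rw [AnalyticSet] at hs
  rcases hs with rfl | ⟨f, hf, rfl⟩
  · exact MeasurableSet.empty.nullMeasurableSet
  letI := TopologicalSpace.upgradeIsCompletelyMetrizable α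
  refine nullMeasurableSet_of_inner ν fun ε hε => ?_
  -- the finite-prefix constraint sets
  set E : (ℕ → ℕ) → ℕ → Set (ℕ → ℕ) := fun n k => {x | ∀ i < k, x i ≤ n i} with hE
  have hEdep : ∀ (m m' : ℕ → ℕ) (k : ℕ), (∀ i < k, m i = m' i) → E m k = E m' k := by
    intro m m' k h
    ext x
    exact forall₂_congr fun i hi => by rw [h i hi]
  -- choice of the next bound
  have step : ∀ (m : ℕ → ℕ) (k : ℕ), ∃ j : ℕ,
      ν (f '' E m k) ≤ ν (f '' E (Function.update m k j) (k + 1)) + ε / 2 ^ (k + 1) := by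
    intro m k
    have hsplit : ∀ j : ℕ, E (Function.update m k j) (k + 1) = E m k ∩ {x | x k ≤ j} := by
      intro j
      ext x
      simp only [hE, mem_setOf_eq, mem_inter_iff, Nat.lt_succ_iff_lt_or_eq]
      constructor
      · intro h
        refine ⟨fun i hi => ?_, ?_⟩
        · have := h i (Or.inl hi)
          rwa [Function.update_of_ne hi.ne] at this
        · have := h k (Or.inr rfl)
          rwa [Function.update_self] at this
      · rintro ⟨h1, h2⟩ i (hi | rfl)
        · rw [Function.update_of_ne hi.ne]; exact h1 i hi
        · rw [Function.update_self]; exact h2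
    have hmono : Monotone fun j : ℕ => f '' (E m k ∩ {x | x k ≤ j}) := by
      intro a b hab
      exact image_mono (f := f) (inter_subset_inter_right _ fun x hx => le_trans hx hab)
    have hcov0 : E m k = ⋃ j : ℕ, (E m k ∩ {x | x k ≤ j}) := by
      ext x
      constructor
      · intro h; exact mem_iUnion.2 ⟨x k, h, show x k ≤ x k from le_rfl⟩
      · intro h; exact (mem_iUnion.1 h).choose_spec.1
    have hcov : f '' E m k = ⋃ j : ℕ, f '' (E m k ∩ {x | x k ≤ j}) := by
      rw [← image_iUnion, ← hcov0]
    have hsup : ν (f '' E m k) = ⨆ j : ℕ, ν (f '' (E m k ∩ {x | x k ≤ j})) := by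
      rw [hcov]
      exact hmono.measure_iUnion
    have hε' : (ε / 2 ^ (k + 1) : ℝ≥0∞) ≠ 0 := by
      exact (ENNReal.div_pos hε (ENNReal.pow_ne_top ENNReal.ofNat_ne_top)).ne'
    by_cases h0 : ν (f '' E m k) ≤ ε / 2 ^ (k + 1)
    · exact ⟨0, le_trans h0 le_add_self⟩
    · push_neg at h0
      have hlt : ν (f '' E m k) - ε / 2 ^ (k + 1) < ν (f '' E m k) :=
        ENNReal.sub_lt_self (measure_ne_top ν _) (fun h => absurd h (by
          intro hh; rw [hh] at h0; exact absurd h0 (by simp))) hε'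
      obtain ⟨j, hj⟩ := lt_iSup_iff.1 (hlt.trans_eq hsup)
      refine ⟨j, ?_⟩
      rw [hsplit j]
      exact tsub_le_iff_right.1 hj.le
  choose pick hpick using step
  -- recursive construction of the bounds
  set nf : ℕ → ℕ → ℕ := fun k => Nat.rec (fun _ => 0) (fun k ih => Function.update ih k (pick ih k)) k with hnf
  set n : ℕ → ℕ := fun i => nf (i + 1) i with hn
  have hagree : ∀ k i, i < k → nf k i = n i := by
    intro k
    induction k with
    | zero => intro i hi; omega
    | succ k ih =>
      intro i hi
      rcases Nat.lt_succ_iff_lt_or_eq.1 hi with hi' | rfl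
      · have : nf (k + 1) i = nf k i := Function.update_of_ne hi'.ne _ _
        rw [this, ih i hi']
      · rfl
  have hEnf : ∀ k, E (nf k) k = E n k := fun k => hEdep _ _ _ (fun i hi => hagree k i hi)
  have key : ∀ k, ν (f '' E n k) ≤ ν (f '' E n (k + 1)) + ε / 2 ^ (k + 1) := by
    intro k
    have h1 := hpick (nf k) k
    rw [hEnf k] at h1
    have h2 : Function.update (nf k) k (pick (nf k) k) = nf (k + 1) := rfl
    rw [h2, hEnf (k + 1)] at h1
    exact h1
  -- partial sums of the errors stay below ε
  have hhalf : ∀ k : ℕ, (ε / 2 ^ (k + 1) + ε / 2 ^ (k + 1) : ℝ≥0∞) = ε / 2 ^ k := by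
    intro k
    have h1 : (ε / 2 ^ (k + 1) : ℝ≥0∞) = (ε / 2 ^ k) / 2 := by
      rw [pow_succ, div_eq_mul_inv, div_eq_mul_inv, div_eq_mul_inv,
        ENNReal.mul_inv (by simp) (by simp), mul_assoc]
    rw [h1, ENNReal.add_halves]
  have hsum : ∀ k : ℕ, (∑ i ∈ Finset.range k, ε / 2 ^ (i + 1)) + ε / 2 ^ k ≤ ε := by
    intro k
    induction k with
    | zero => simp
    | succ k ih =>
      rw [Finset.sum_range_succ, add_assoc, hhalf k]
      exact ih
  have iter : ∀ k, ν (Set.range f) ≤ ν (f '' E n k) + ∑ i ∈ Finset.range k, ε / 2 ^ (i + 1) := by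
    intro k
    induction k with
    | zero =>
      have h0 : E n 0 = univ := by
        ext x; simp [hE]
      rw [h0, image_univ]
      simp
    | succ k ih =>
      calc ν (Set.range f) ≤ ν (f '' E n k) + ∑ i ∈ Finset.range k, ε / 2 ^ (i + 1) := ih
      _ ≤ (ν (f '' E n (k + 1)) + ε / 2 ^ (k + 1)) + ∑ i ∈ Finset.range k, ε / 2 ^ (i + 1) :=
          add_le_add_left (key k) _
      _ = ν (f '' E n (k + 1)) + ∑ i ∈ Finset.range (k + 1), ε / 2 ^ (i + 1) := by
          rw [Finset.sum_range_succ]; ring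
  have hbound : ∀ k, ν (Set.range f) ≤ ν (closure (f '' E n k)) + ε := by
    intro k
    refine (iter k).trans (add_le_add (measure_mono subset_closure) ?_)
    exact le_self_add.trans (hsum k)
  -- the compact-like limit set
  set C : Set α := ⋂ k, closure (f '' E n k) with hC
  have hCmeas : MeasurableSet C := MeasurableSet.iInter fun k => isClosed_closure.measurableSet
  have hEanti : Antitone (E n) := by
    intro a b hab x hx i hi
    exact hx i (lt_of_lt_of_le hi hab)
  have hBanti : Antitone fun k => closure (f '' E n k) := fun a b hab =>
    closure_mono (image_mono (f := f) (hEanti hab))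
  have hνC : ν C = ⨅ k, ν (closure (f '' E n k)) :=
    hBanti.measure_iInter (fun k => isClosed_closure.measurableSet.nullMeasurableSet)
      ⟨0, measure_ne_top ν _⟩
  have hle : ν (Set.range f) ≤ ν C + ε := by
    rw [hνC, ENNReal.iInf_add]
    exact le_iInf fun k => hbound k
  -- C is contained in the range of f
  have hCsub : C ⊆ Set.range f := by
    intro y hy
    have hy' : ∀ k : ℕ, ∃ z ∈ f '' E n k, dist y z < 1 / (k + 1) := by
      intro k
      have : y ∈ closure (f '' E n k) := mem_iInter.1 hy k
      exact Metric.mem_closure_iff.1 this _ (by positivity)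
    choose z hz hzd using hy'
    choose x hx hfx using hz
    -- all the x k lie in a common compact set
    set m : ℕ → ℕ := fun i => max (n i) (Finset.sup (Finset.range (i + 1)) fun k => x k i) with hm
    have hxm : ∀ k, x k ∈ Set.pi univ fun i => Iic (m i) := by
      intro k i _
      rcases lt_or_ge i k with hik | hik
      · exact le_trans (hx k i hik) (le_max_left _ _)
      · exact le_trans (Finset.le_sup (f := fun k => x k i)
          (Finset.mem_range.2 (Nat.lt_succ_of_le hik))) (le_max_right _ _)
    have hK : IsCompact (Set.pi univ fun i : ℕ => Iic (m i)) :=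
      isCompact_univ_pi fun i => (Set.finite_Iic (m i)).isCompact
    obtain ⟨a, -, φ, hφ, hconv⟩ := hK.tendsto_subseq hxm
    refine ⟨a, ?_⟩
    have h1 : Tendsto (fun j => f (x (φ j))) atTop (𝓝 (f a)) :=
      (hf.tendsto a).comp hconv
    have h2 : Tendsto (fun j => f (x (φ j))) atTop (𝓝 y) := by
      rw [tendsto_iff_dist_tendsto_zero]
      refine squeeze_zero (fun j => dist_nonneg) (fun j => ?_)
        tendsto_one_div_add_atTop_nhds_zero_nat
      have hd : dist y (f (x (φ j))) < 1 / (φ j + 1) := by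
        rw [hfx (φ j)]; exact hzd (φ j)
      rw [dist_comm] at hd
      refine hd.le.trans ?_
      have : (j : ℝ) + 1 ≤ (φ j : ℝ) + 1 := by
        have h3 : j ≤ φ j := hφ.le_apply
        exact_mod_cast Nat.succ_le_succ h3
      exact one_div_le_one_div_of_le (by positivity) this
    exact tendsto_nhds_unique h1 h2
  exact ⟨C, hCmeas, hCsub, hle⟩

/-- Pull back a null measurable set along a measurable map. -/
lemma nullMeasurableSet_preimage_of_map {Ω Z : Type*} [MeasurableSpace Ω] [MeasurableSpace Z]
    {g : Ω → Z} (hg : Measurable g) {μ : Measure Ω} {N : Set Z}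
    (hN : NullMeasurableSet N (μ.map g)) : NullMeasurableSet (g ⁻¹' N) μ := by
  obtain ⟨T, heq⟩ := hN.exists_measurable_superset_ae_eq
  have hzero : ∀ S : Set Z, μ.map g S = 0 → μ (g ⁻¹' S) = 0 := by
    intro S hS
    have h1 : μ.map g (toMeasurable (μ.map g) S) = 0 := by
      rwa [measure_toMeasurable]
    rw [MeasureTheory.Measure.map_apply hg (measurableSet_toMeasurable _ _)] at h1
    exact measure_mono_null (Set.preimage_mono (subset_toMeasurable _ _)) h1
  obtain ⟨hTsup, hTm, hTeq⟩ := heq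
  refine (hg hTm).nullMeasurableSet.congr ?_
  rw [MeasureTheory.ae_eq_set] at hTeq ⊢
  constructor
  · rw [← Set.preimage_diff]
    exact hzero _ hTeq.1
  · rw [← Set.preimage_diff]
    exact hzero _ hTeq.2

section Proj

variable {Ω X : Type*} [MeasurableSpace Ω] [TopologicalSpace X] [PolishSpace X]
    [MeasurableSpace X] [BorelSpace X]

/-- A set in `Ω × X` that is a pullback of a Borel set in `Z × X` for a Polish `Z`,
along a measurable map `Ω → Z` in the first coordinate. -/
private def IsGoodSet (M : Set (Ω × X)) : Prop :=
  ∃ (Z : Type) (tZ : TopologicalSpace Z) (_ : @PolishSpace Z tZ) (mZ : MeasurableSpace Z)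
    (_ : @BorelSpace Z tZ mZ) (g : Ω → Z) (M' : Set (Z × X)),
    Measurable g ∧ MeasurableSet M' ∧ M = (fun p : Ω × X => (g p.1, p.2)) ⁻¹' M'

private lemma isGoodSet_of_measurableSet {M : Set (Ω × X)} (hM : MeasurableSet M) :
    IsGoodSet M := by
  rw [← generateFrom_prod] at hM
  refine MeasurableSpace.generateFrom_induction _ (fun s _ => IsGoodSet s) ?_ ?_ ?_ ?_ M hM
  · -- rectangles
    rintro t ⟨A, hA, B, hB, rfl⟩ -
    refine ⟨ℝ, inferInstance, inferInstance, inferInstance, inferInstance,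
      A.indicator fun _ => (1 : ℝ), {(1 : ℝ)} ×ˢ B, measurable_const.indicator hA,
      (measurableSet_singleton 1).prod hB, ?_⟩
    ext p
    simp only [Set.mem_preimage, Set.mem_prod, Set.mem_singleton_iff, Set.indicator_apply]
    constructor
    · rintro ⟨h1, h2⟩
      exact ⟨Set.indicator_of_mem h1 _, h2⟩
    · rintro ⟨h1, h2⟩
      refine ⟨?_, h2⟩
      by_contra hp
      rw [Set.indicator_of_notMem hp] at h1
      exact one_ne_zero h1.symm
  · -- empty set
    exact ⟨ℝ, inferInstance, inferInstance, inferInstance, inferInstance, fun _ => 0, ∅,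
      measurable_const, MeasurableSet.empty, by simp⟩
  · -- complement
    rintro t - ⟨Z, tZ, pZ, mZ, bZ, g, M', hg, hM', hEq⟩
    exact ⟨Z, tZ, pZ, mZ, bZ, g, M'ᶜ, hg, hM'.compl, by rw [hEq, Set.preimage_compl]⟩
  · -- countable union
    rintro s hs hgood
    choose Z tZ pZ mZ bZ g M' hg hM' hEq using hgood
    letI : ∀ n, TopologicalSpace (Z n) := tZ
    letI : ∀ n, PolishSpace (Z n) := pZ
    letI : ∀ n, MeasurableSpace (Z n) := mZ
    letI : ∀ n, BorelSpace (Z n) := bZ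
    refine ⟨∀ n, Z n, inferInstance, inferInstance, inferInstance, inferInstance,
      fun ω n => g n ω, ⋃ n, (fun q : (∀ n, Z n) × X => (q.1 n, q.2)) ⁻¹' M' n,
      measurable_pi_lambda _ fun n => hg n,
      MeasurableSet.iUnion fun n =>
        (((measurable_pi_apply n).comp measurable_fst).prodMk measurable_snd) (hM' n), ?_⟩
    rw [Set.preimage_iUnion]
    exact Set.iUnion_congr fun n => by rw [hEq n, ← Set.preimage_comp]; rfl

/-- The measurable projection theorem. -/
private lemma nullMeasurableSet_proj {M : Set (Ω × X)} (hM : MeasurableSet M)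
    (μ : Measure Ω) [IsFiniteMeasure μ] : NullMeasurableSet {ω | ∃ x, (ω, x) ∈ M} μ := by
  obtain ⟨Z, tZ, pZ, mZ, bZ, g, M', hg, hM', hEq⟩ := isGoodSet_of_measurableSet hM
  have hproj : {ω | ∃ x, (ω, x) ∈ M} = g ⁻¹' {z | ∃ x, (z, x) ∈ M'} := by
    ext ω
    simp only [Set.mem_setOf_eq, Set.mem_preimage, hEq]
  rw [hproj]
  have hAn : AnalyticSet {z | ∃ x, (z, x) ∈ M'} := by
    have himg : {z | ∃ x, (z, x) ∈ M'} = Prod.fst '' M' := by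
      ext z
      constructor
      · rintro ⟨x, hx⟩
        exact ⟨(z, x), hx, rfl⟩
      · rintro ⟨⟨z', x⟩, hx, rfl⟩
        exact ⟨x, hx⟩
    rw [himg]
    exact hM'.analyticSet_image measurable_fst
  haveI : IsFiniteMeasure (μ.map g) :=
    ⟨by rw [MeasureTheory.Measure.map_apply hg MeasurableSet.univ]; exact measure_lt_top μ _⟩
  exact nullMeasurableSet_preimage_of_map hg (AnalyticSet.nullMeasurableSet' hAn (μ.map g))

end Proj

/-- A multifunction into a Polish space with measurable graph is universally
Borel-measurable. -/
theorem stmt_12 {Ω X : Type*} [MeasurableSpace Ω] [TopologicalSpace X] [PolishSpace X]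
    [MeasurableSpace X] [BorelSpace X]
    (F : Ω → Set X)
    (hGr : MeasurableSet {p : Ω × X | p.2 ∈ F p.1}) :
    ∀ A : Set X, MeasurableSet A → ∀ (μ : Measure Ω), IsFiniteMeasure μ →
      NullMeasurableSet {ω | (F ω ∩ A).Nonempty} μ := by
  intro A hA μ hfin
  haveI := hfin
  have hM : MeasurableSet ({p : Ω × X | p.2 ∈ F p.1} ∩ Prod.snd ⁻¹' A) :=
    hGr.inter (measurable_snd hA)
  have h := nullMeasurableSet_proj hM μ
  have hset : {ω | (F ω ∩ A).Nonempty} =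
      {ω | ∃ x, (ω, x) ∈ ({p : Ω × X | p.2 ∈ F p.1} ∩ Prod.snd ⁻¹' A)} := by
    ext ω
    simp only [Set.mem_setOf_eq, Set.Nonempty, Set.mem_inter_iff, Set.mem_preimage]
  rw [hset]
  exact h
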